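/- Let q be a complex number with |q| = 1 and let (V₁,V₂) be a q-commutative pair of isometries on a complex Hilbert space such that at least one of V₁, V₂ is a shift. Then the product V = V₁V₂ is a shift, i.e., V^{*n} → 0 in the strong operator topology. -/

import Mathlib

open ContinuousLinearMap Filter

lemma stmt_15_isom_norm {H : Type*} [NormedAddCommGroup H] [InnerProductSpace ℂ H]
    [CompleteSpace H] (V : H →L[ℂ] H) (hV : adjoint V ∘L V = 1) (x : H) : ‖V x‖ = ‖x‖ := by
  have h1 : adjoint V (V x) = x := by
    have := congrArg (fun T : H →L[ℂ] H => T x) hV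
    simpa using this
  have h : (inner ℂ (V x) (V x) : ℂ) = inner ℂ x x := by
    rw [← ContinuousLinearMap.adjoint_inner_right, h1]
  have h2 : ‖V x‖ ^ 2 = ‖x‖ ^ 2 := by
    have := congrArg (RCLike.re (K := ℂ)) h
    rwa [inner_self_eq_norm_sq (𝕜 := ℂ), inner_self_eq_norm_sq (𝕜 := ℂ)] at this
  nlinarith [norm_nonneg (V x), norm_nonneg x]

lemma stmt_15_contr {H : Type*} [NormedAddCommGroup H] [InnerProductSpace ℂ H]
    [CompleteSpace H] (V : H →L[ℂ] H) (hV : adjoint V ∘L V = 1) (n : ℕ) (x : H) :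
    ‖((adjoint V) ^ n) x‖ ≤ ‖x‖ := by
  have hVn : ‖V‖ ≤ 1 := by
    refine ContinuousLinearMap.opNorm_le_bound _ zero_le_one fun y => ?_
    rw [stmt_15_isom_norm V hV, one_mul]
  have hadj : ‖adjoint V‖ ≤ 1 := by
    rwa [← ContinuousLinearMap.star_eq_adjoint, norm_star]
  induction n generalizing x with
  | zero => simp
  | succ n ih =>
      rw [pow_succ]
      calc ‖(adjoint V ^ n) (adjoint V x)‖ ≤ ‖adjoint V x‖ := ih (adjoint V x)
        _ ≤ ‖adjoint V‖ * ‖x‖ := (adjoint V).le_opNorm x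
        _ ≤ 1 * ‖x‖ := by gcongr
        _ = ‖x‖ := one_mul _

theorem stmt_15 {H : Type*} [NormedAddCommGroup H] [InnerProductSpace ℂ H] [CompleteSpace H]
    (q : ℂ) (hq : ‖q‖ = 1) (V₁ V₂ : H →L[ℂ] H)
    (hV₁ : adjoint V₁ ∘L V₁ = 1) (hV₂ : adjoint V₂ ∘L V₂ = 1)
    (hcomm : V₁ ∘L V₂ = q • (V₂ ∘L V₁))
    (hshift : (∀ h : H, Tendsto (fun n : ℕ => ((adjoint V₁) ^ n) h) atTop (nhds 0)) ∨
      (∀ h : H, Tendsto (fun n : ℕ => ((adjoint V₂) ^ n) h) atTop (nhds 0))) :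
    ∀ h : H, Tendsto (fun n : ℕ => ((adjoint (V₁ ∘L V₂)) ^ n) h) atTop (nhds 0) := by
  have hq0 : q ≠ 0 := by intro h; rw [h, norm_zero] at hq; norm_num at hq
  have hcomm' : V₁ * V₂ = q • (V₂ * V₁) := hcomm
  have hcomm₂ : V₂ * V₁ = q⁻¹ • (V₁ * V₂) := by
    rw [hcomm', smul_smul, inv_mul_cancel₀ hq0, one_smul]
  -- V₂^n * V₁ = q⁻ⁿ • (V₁ * V₂^n)
  have hswap₁ : ∀ n : ℕ, V₂ ^ n * V₁ = (q⁻¹) ^ n • (V₁ * V₂ ^ n) := by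
    intro n
    induction n with
    | zero => simp
    | succ n ih =>
        rw [pow_succ, mul_assoc, hcomm₂, mul_smul_comm, ← mul_assoc, ih,
          smul_mul_assoc, smul_smul, pow_succ, mul_assoc]
        ring_nf
  -- V₁^n * V₂ = qⁿ • (V₂ * V₁^n)
  have hswap₂ : ∀ n : ℕ, V₁ ^ n * V₂ = q ^ n • (V₂ * V₁ ^ n) := by
    intro n
    induction n with
    | zero => simp
    | succ n ih =>
        rw [pow_succ, mul_assoc, hcomm', mul_smul_comm, ← mul_assoc, ih,
          smul_mul_assoc, smul_smul, pow_succ, mul_assoc]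
        ring_nf
  -- (V₁V₂)^n = c • (V₁^n V₂^n) with ‖c‖ = 1
  have hdec₁ : ∀ n : ℕ, ∃ c : ℂ, ‖c‖ = 1 ∧ (V₁ * V₂) ^ n = c • (V₁ ^ n * V₂ ^ n) := by
    intro n
    induction n with
    | zero => exact ⟨1, by simp, by simp⟩
    | succ n ih =>
        obtain ⟨c, hc, hceq⟩ := ih
        refine ⟨c * (q⁻¹) ^ n, ?_, ?_⟩
        · rw [norm_mul, hc, norm_pow, norm_inv, hq]; simp
        · rw [pow_succ, hceq, smul_mul_assoc, mul_assoc, ← mul_assoc (V₂ ^ n),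
            hswap₁ n, smul_mul_assoc, mul_smul_comm, smul_smul]
          rw [pow_succ V₁, pow_succ V₂]
          ring_nf
          rw [mul_assoc, mul_assoc]
  have hdec₂ : ∀ n : ℕ, ∃ c : ℂ, ‖c‖ = 1 ∧ (V₁ * V₂) ^ n = c • (V₂ ^ n * V₁ ^ n) := by
    intro n
    induction n with
    | zero => exact ⟨1, by simp, by simp⟩
    | succ n ih =>
        obtain ⟨c, hc, hceq⟩ := ih
        refine ⟨c * q ^ n * q, ?_, ?_⟩
        · rw [norm_mul, norm_mul, hc, norm_pow, hq]; simp
        · rw [pow_succ, hceq, smul_mul_assoc]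
          rw [show V₂ ^ n * V₁ ^ n * (V₁ * V₂) = V₂ ^ n * ((V₁ ^ n * V₁) * V₂) by
            simp [mul_assoc]]
          rw [← pow_succ V₁, hswap₂ (n + 1), mul_smul_comm, smul_smul]
          rw [pow_succ V₂, pow_succ q]
          rw [show V₂ ^ n * (V₂ * V₁ ^ (n + 1)) = V₂ ^ n * V₂ * V₁ ^ (n + 1) by
            simp [mul_assoc]]
          ring_nf
  intro h
  rw [tendsto_zero_iff_norm_tendsto_zero]
  rcases hshift with hs | hs
  · -- bound by ‖(adjoint V₁)^n h‖ using hdec₁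
    have hbound : ∀ n : ℕ, ‖((adjoint (V₁ ∘L V₂)) ^ n) h‖ ≤ ‖((adjoint V₁) ^ n) h‖ := by
      intro n
      obtain ⟨c, hc, hceq⟩ := hdec₁ n
      have key : (adjoint (V₁ ∘L V₂)) ^ n
          = (starRingEnd ℂ c) • ((adjoint V₂) ^ n * (adjoint V₁) ^ n) := by
        rw [← ContinuousLinearMap.star_eq_adjoint, ← star_pow]
        have : (V₁ ∘L V₂ : H →L[ℂ] H) = V₁ * V₂ := rfl
        rw [this, hceq, star_smul, star_mul, star_pow, star_pow,
          ContinuousLinearMap.star_eq_adjoint, ContinuousLinearMap.star_eq_adjoint]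
        rfl
      rw [key]
      simp only [ContinuousLinearMap.smul_apply, norm_smul]
      rw [RCLike.norm_conj, hc, one_mul]
      have : ((adjoint V₂) ^ n * (adjoint V₁) ^ n) h
          = ((adjoint V₂) ^ n) (((adjoint V₁) ^ n) h) := rfl
      rw [this]
      exact stmt_15_contr V₂ hV₂ n _
    have hnorm : Tendsto (fun n : ℕ => ‖((adjoint V₁) ^ n) h‖) atTop (nhds 0) := by
      rw [← tendsto_zero_iff_norm_tendsto_zero]; exact hs h
    exact squeeze_zero (fun n => norm_nonneg _) hbound hnorm
  · have hbound : ∀ n : ℕ, ‖((adjoint (V₁ ∘L V₂)) ^ n) h‖ ≤ ‖((adjoint V₂) ^ n) h‖ := by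
      intro n
      obtain ⟨c, hc, hceq⟩ := hdec₂ n
      have key : (adjoint (V₁ ∘L V₂)) ^ n
          = (starRingEnd ℂ c) • ((adjoint V₁) ^ n * (adjoint V₂) ^ n) := by
        rw [← ContinuousLinearMap.star_eq_adjoint, ← star_pow]
        have : (V₁ ∘L V₂ : H →L[ℂ] H) = V₁ * V₂ := rfl
        rw [this, hceq, star_smul, star_mul, star_pow, star_pow,
          ContinuousLinearMap.star_eq_adjoint, ContinuousLinearMap.star_eq_adjoint]
        rfl
      rw [key]
      simp only [ContinuousLinearMap.smul_apply, norm_smul]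
      rw [RCLike.norm_conj, hc, one_mul]
      have : ((adjoint V₁) ^ n * (adjoint V₂) ^ n) h
          = ((adjoint V₁) ^ n) (((adjoint V₂) ^ n) h) := rfl
      rw [this]
      exact stmt_15_contr V₁ hV₁ n _
    have hnorm : Tendsto (fun n : ℕ => ‖((adjoint V₂) ^ n) h‖) atTop (nhds 0) := by
      rw [← tendsto_zero_iff_norm_tendsto_zero]; exact hs h
    exact squeeze_zero (fun n => norm_nonneg _) hbound hnorm
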